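/- Let p : X → Y be a covering map between arbitrary topological spaces and let x ∈ X be such that the singleton {x} is a closed subset of X. Then the singleton {p(x)} is a closed subset of Y. -/

import Mathlib

/-- A covering map sends closed points to closed points. -/
theorem statement4 {X Y : Type*} [TopologicalSpace X] [TopologicalSpace Y]
    (p : X → Y) (hp : IsCoveringMap p) (x : X) (hx : IsClosed ({x} : Set X)) :
    IsClosed ({p x} : Set Y) := by
  rw [← closure_subset_iff_isClosed]
  intro y hy
  have hd := (hp y).1
  haveI : Nonempty (p ⁻¹' {y}) := by
    obtain ⟨_, U, hyU, hUo, -, H, -⟩ := hp y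
    rcases mem_closure_iff.1 hy U hUo hyU with ⟨z, hz1, hz2⟩
    rw [Set.mem_singleton_iff.1 hz2] at hz1
    exact ⟨(H ⟨x, hz1⟩).2⟩
  obtain ⟨t, hyt⟩ : ∃ t : Bundle.Trivialization (p ⁻¹' {y}) p, y ∈ t.baseSet :=
    ⟨_, (hp y).mem_toTrivialization_baseSet⟩
  haveI := hd
  -- p x ∈ t.baseSet since y is in the closure of {p x}
  have hpx : p x ∈ t.baseSet := by
    rcases mem_closure_iff.1 hy t.baseSet t.open_baseSet hyt with ⟨z, hz1, hz2⟩
    rwa [Set.mem_singleton_iff.1 hz2] at hz1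
  have hxs : x ∈ t.source := t.mem_source.2 hpx
  set i := (t x).2 with hi
  have hmem : (y, i) ∈ t.target := t.mem_target.2 hyt
  set x' := t.toOpenPartialHomeomorph.symm (y, i) with hx'
  have hpx' : p x' = y := t.proj_symm_apply hmem
  -- x' is in the closure of {x}
  have hcl : x' ∈ closure ({x} : Set X) := by
    rw [mem_closure_iff]
    intro V hV hxV
    have hcont : ContinuousAt t.toOpenPartialHomeomorph.symm (y, i) :=
      t.toOpenPartialHomeomorph.continuousAt_symm hmem
    have hW : t.toOpenPartialHomeomorph.symm ⁻¹' V ∈ nhds (y, i) :=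
      hcont.preimage_mem_nhds (hV.mem_nhds hxV)
    obtain ⟨W, hWsub, hWopen, hWmem⟩ := mem_nhds_iff.1 hW
    obtain ⟨U, S, hUopen, hSopen, hyU, hiS, hUS⟩ := isOpen_prod_iff.1 hWopen y i hWmem
    have hpxU : p x ∈ U := by
      rcases mem_closure_iff.1 hy U hUopen hyU with ⟨z, hz1, hz2⟩
      rwa [Set.mem_singleton_iff.1 hz2] at hz1
    have htx : t x = (p x, i) := by
      rw [hi]; exact Prod.ext (t.coe_fst hxs) rfl
    have : x ∈ V := by
      have : t x ∈ W := by rw [htx]; exact hUS ⟨hpxU, hiS⟩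
      have := hWsub this
      exact t.toOpenPartialHomeomorph.left_inv hxs ▸ Set.mem_preimage.1 this
    exact ⟨x, this, rfl⟩
  rw [hx.closure_eq] at hcl
  rw [Set.mem_singleton_iff.1 hcl] at hpx'
  exact hpx' ▸ rfl
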